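/- arXiv:2409.05652 — 3 statements merged into one kernel-verified Lean document; each statement's English description precedes it below -/
import Mathlib

section
/- Let n ≥ 2 be an integer, k ≥ 1 an integer, γ > 1, and ε > 0. If V ∈ C²((0,1)) ∩ C((0,1]) satisfies L_k V = 0 on (0,1) and V(r) → 0 as r → 0+, then |V(r)| ≤ r^{α_k} |V(1)| for all r ∈ (0,1]. -/
open Set Filter

noncomputable section

/-- The ODE operator `L_k`:
`(L_k h)(r) = h'' + ((n-2)/r + 2r/(ε+r²)) h' - (k(k+n-3)/r² + 2/(γ(ε+r²))) h`. -/
def Lk (n k : ℕ) (γ ε : ℝ) (h : ℝ → ℝ) (r : ℝ) : ℝ :=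
  deriv (deriv h) r + (((n:ℝ) - 2)/r + 2*r/(ε + r^2)) * deriv h r
    - ((k:ℝ)*((k:ℝ) + (n:ℝ) - 3)/r^2 + 2/(γ*(ε + r^2))) * h r

/-- `α_k := (-(n-1) + √((n-1)² + 4(k(k+n-3) + 2/γ)))/2`. -/
def alphaK (n k : ℕ) (γ : ℝ) : ℝ :=
  (-((n:ℝ) - 1) + Real.sqrt (((n:ℝ)-1)^2 + 4*((k:ℝ)*((k:ℝ)+(n:ℝ)-3) + 2/γ)))/2

lemma alpha_alg (n k : ℕ) (hn : 2 ≤ n) (hk : 1 ≤ k) {γ : ℝ} (hγ : 0 < γ) :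
    (alphaK n k γ)^2 + ((n:ℝ)-1)*(alphaK n k γ) = (k:ℝ)*((k:ℝ)+(n:ℝ)-3) + 2/γ := by
  have hn' : (2:ℝ) ≤ n := by exact_mod_cast hn
  have hk' : (1:ℝ) ≤ k := by exact_mod_cast hk
  have hKnn : 0 ≤ (k:ℝ)*((k:ℝ)+(n:ℝ)-3) := by nlinarith
  have hg : 0 < 2/γ := by positivity
  have hD : 0 ≤ ((n:ℝ)-1)^2 + 4*((k:ℝ)*((k:ℝ)+(n:ℝ)-3) + 2/γ) := by nlinarith
  have hs := Real.sq_sqrt hD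
  have h1 : 2*(alphaK n k γ) + ((n:ℝ)-1)
      = Real.sqrt (((n:ℝ)-1)^2 + 4*((k:ℝ)*((k:ℝ)+(n:ℝ)-3) + 2/γ)) := by
    unfold alphaK; ring
  have h2 : (2*(alphaK n k γ) + ((n:ℝ)-1))^2
      = ((n:ℝ)-1)^2 + 4*((k:ℝ)*((k:ℝ)+(n:ℝ)-3) + 2/γ) := by rw [h1, hs]
  linear_combination h2/4

lemma alpha_pos (n k : ℕ) (hn : 2 ≤ n) (hk : 1 ≤ k) {γ : ℝ} (hγ : 1 < γ) :
    0 < alphaK n k γ := by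
  have hn' : (2:ℝ) ≤ n := by exact_mod_cast hn
  have hk' : (1:ℝ) ≤ k := by exact_mod_cast hk
  have hγ0 : 0 < γ := by linarith
  have halg := alpha_alg n k hn hk hγ0
  have hg : 0 < 2/γ := by positivity
  have hKnn : 0 ≤ (k:ℝ)*((k:ℝ)+(n:ℝ)-3) := by nlinarith
  have hlt : (n:ℝ)-1 < Real.sqrt (((n:ℝ)-1)^2 + 4*((k:ℝ)*((k:ℝ)+(n:ℝ)-3) + 2/γ)) := by
    rw [show ((n:ℝ)-1)^2 + 4*((k:ℝ)*((k:ℝ)+(n:ℝ)-3) + 2/γ) = ((n:ℝ)-1)^2 + (4*((k:ℝ)*((k:ℝ)+(n:ℝ)-3) + 2/γ)) from by ring]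
    refine (Real.lt_sqrt (by linarith)).2 ?_
    nlinarith
  unfold alphaK
  linarith

lemma alpha_ge (n k : ℕ) (hn : 2 ≤ n) (hk : 1 ≤ k) {γ : ℝ} (hγ : 1 < γ) :
    1/γ ≤ alphaK n k γ := by
  have hn' : (2:ℝ) ≤ n := by exact_mod_cast hn
  have hk' : (1:ℝ) ≤ k := by exact_mod_cast hk
  have hγ0 : 0 < γ := by linarith
  have halg := alpha_alg n k hn hk hγ0
  have hα := alpha_pos n k hn hk hγ
  have ht : 0 < 1/γ := by positivity
  have ht1 : 1/γ < 1 := by rw [div_lt_one hγ0]; linarith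
  by_contra h
  push_neg at h
  have h2 : 2/γ = 2*(1/γ) := by ring
  nlinarith [(1 - 1/γ)*(1/γ + (n:ℝ) - 2), ((k:ℝ)-1)*((k:ℝ)+(n:ℝ)-2), mul_lt_mul_of_pos_left h hα]

lemma secondDeriv_nonpos_of_isLocalMax {f : ℝ → ℝ} {x d : ℝ} (hmax : IsLocalMax f x)
    (hf : ∀ᶠ y in nhds x, DifferentiableAt ℝ f y)
    (hd : HasDerivAt (deriv f) d x) : d ≤ 0 := by
  by_contra h
  push_neg at h
  have h0 : deriv f x = 0 := hmax.deriv_eq_zero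
  have hslope : Tendsto (slope (deriv f) x) (nhdsWithin x {x}ᶜ) (nhds d) :=
    hasDerivAt_iff_tendsto_slope.1 hd
  have hslope' : Tendsto (slope (deriv f) x) (nhdsWithin x (Ioi x)) (nhds d) :=
    hslope.mono_left (nhdsWithin_mono x (fun y hy => ne_of_gt hy))
  have hpos : ∀ᶠ y in nhdsWithin x (Ioi x), 0 < slope (deriv f) x y :=
    hslope'.eventually (eventually_gt_nhds h)
  have derivpos : ∀ᶠ y in nhdsWithin x (Ioi x), 0 < deriv f y := by
    filter_upwards [hpos, self_mem_nhdsWithin] with y hy hxy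
    have hyx : 0 < y - x := sub_pos.2 hxy
    have := mul_pos hy hyx
    rwa [slope_def_field, h0, sub_zero, div_mul_cancel₀ _ hyx.ne'] at this
  rw [Filter.eventually_iff, mem_nhdsGT_iff_exists_Ioc_subset] at derivpos
  obtain ⟨u, hu, hsub⟩ := derivpos
  have hcomb : ∀ᶠ y in nhds x, DifferentiableAt ℝ f y ∧ f y ≤ f x := hf.and hmax
  rw [Metric.eventually_nhds_iff] at hcomb
  obtain ⟨e, he, hball⟩ := hcomb
  set b := min u (x + e/2) with hb
  have hxb : x < b := lt_min hu (by linarith)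
  have hdistb : ∀ y ∈ Icc x b, dist y x < e := by
    intro y hy
    rw [Real.dist_eq, abs_of_nonneg (by linarith [hy.1])]
    have : b ≤ x + e/2 := min_le_right _ _
    linarith [hy.2]
  have hmono : StrictMonoOn f (Icc x b) := by
    apply strictMonoOn_of_deriv_pos (convex_Icc x b)
    · intro y hy
      exact ((hball (hdistb y hy)).1).continuousAt.continuousWithinAt
    · intro y hy
      rw [interior_Icc] at hy
      exact hsub ⟨hy.1, le_trans hy.2.le (min_le_left _ _)⟩
  have h1 : f x < f b := hmono (left_mem_Icc.2 hxb.le) (right_mem_Icc.2 hxb.le) hxb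
  have h2 : f b ≤ f x := (hball (hdistb b (right_mem_Icc.2 hxb.le))).2
  linarith

lemma phi_hasDeriv {β M r : ℝ} (hr : 0 < r) :
    HasDerivAt (fun y : ℝ => y ^ β * M) (β * r^(β-1) * M) r :=
  (Real.hasDerivAt_rpow_const (Or.inl hr.ne')).mul_const M

lemma phi_hasDeriv2 {β M r : ℝ} (hr : 0 < r) :
    HasDerivAt (fun y : ℝ => β * y ^ (β-1) * M) (β * (β-1) * r^(β-2) * M) r := by
  have := ((Real.hasDerivAt_rpow_const (p := β - 1) (Or.inl hr.ne')).const_mul β).mul_const M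
  rw [show β * (β-1) * r^(β-2) * M = β * ((β - 1) * r ^ (β - 1 - 1)) * M from by
    rw [show β - 1 - 1 = β - 2 from by ring]; ring]
  exact this

lemma barrier (n k : ℕ) (hn : 2 ≤ n) (hk : 1 ≤ k) {γ ε : ℝ} (hγ : 1 < γ) (hε : 0 < ε)
    {M r : ℝ} (hM : 0 ≤ M) (hr : 0 < r) :
    (alphaK n k γ) * ((alphaK n k γ)-1) * r^((alphaK n k γ)-2) * M
      + (((n:ℝ) - 2)/r + 2*r/(ε + r^2)) * ((alphaK n k γ) * r^((alphaK n k γ)-1) * M)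
      - ((k:ℝ)*((k:ℝ) + (n:ℝ) - 3)/r^2 + 2/(γ*(ε + r^2))) * (r^(alphaK n k γ) * M) ≤ 0 := by
  set α := alphaK n k γ with hα
  have hγ0 : 0 < γ := by linarith
  have halg : α^2 + ((n:ℝ)-1)*α = (k:ℝ)*((k:ℝ)+(n:ℝ)-3) + 2/γ := alpha_alg n k hn hk hγ0
  have hαγ : 1/γ ≤ α := alpha_ge n k hn hk hγ
  have hp : (0:ℝ) < r^(α-2) := Real.rpow_pos_of_pos hr _
  have h1 : r^(α-1) = r^(α-2) * r := by
    rw [show α - 1 = (α-2) + 1 from by ring, Real.rpow_add hr, Real.rpow_one]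
  have h2 : r^α = r^(α-2) * r^2 := by
    have h22 : r ^ (2:ℝ) = r^2 := by
      rw [show (2:ℝ) = ((2:ℕ):ℝ) from by norm_num, Real.rpow_natCast]
    rw [← h22, ← Real.rpow_add hr]
    congr 1
    ring
  have hK : (k:ℝ)*((k:ℝ)+(n:ℝ)-3) = α^2 + ((n:ℝ)-1)*α - 2/γ := by linarith
  have hden : (0:ℝ) < ε + r^2 := by positivity
  have key : α * (α-1) * r^(α-2) * M
      + (((n:ℝ) - 2)/r + 2*r/(ε + r^2)) * (α * r^(α-1) * M)
      - ((k:ℝ)*((k:ℝ) + (n:ℝ) - 3)/r^2 + 2/(γ*(ε + r^2))) * (r^α * M)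
      = M * r^(α-2) * ((2*α - 2/γ) * (r^2/(ε + r^2) - 1)) := by
    rw [h1, h2, hK]
    field_simp
    ring
  rw [key]
  have hq : r^2/(ε + r^2) - 1 ≤ 0 := by
    rw [sub_nonpos, div_le_one hden]; linarith
  have hgg : 2/γ = 2*(1/γ) := by ring
  have h2α : 0 ≤ 2*α - 2/γ := by linarith
  have hX : (2*α - 2/γ) * (r^2/(ε + r^2) - 1) ≤ 0 := mul_nonpos_of_nonneg_of_nonpos h2α hq
  exact mul_nonpos_of_nonneg_of_nonpos (mul_nonneg hM hp.le) hX

lemma Lk_neg (n k : ℕ) (γ ε : ℝ) (V : ℝ → ℝ) (r : ℝ) :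
    Lk n k γ ε (fun y => -V y) r = -(Lk n k γ ε V r) := by
  unfold Lk
  have h1 : deriv (fun y => -V y) = fun y => -(deriv V y) := funext fun y => deriv.neg
  rw [h1]
  have h2 : deriv (fun y => -(deriv V y)) r = -(deriv (deriv V) r) := deriv.neg
  rw [h2]
  ring

lemma one_side (n k : ℕ) (hn : 2 ≤ n) (hk : 1 ≤ k) (γ ε : ℝ)
    (hγ : 1 < γ) (hε : 0 < ε) (V : ℝ → ℝ) (M : ℝ) (hM : 0 ≤ M) (hM1 : V 1 ≤ M)
    (hV2 : ∀ r ∈ Ioo (0:ℝ) 1, ContDiffAt ℝ 2 V r)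
    (hVc : ContinuousOn V (Ioc (0:ℝ) 1))
    (hODE : ∀ r ∈ Ioo (0:ℝ) 1, Lk n k γ ε V r = 0)
    (hV0 : Tendsto V (nhdsWithin 0 (Ioi 0)) (nhds 0)) :
    ∀ r ∈ Ioc (0:ℝ) 1, V r ≤ r ^ alphaK n k γ * M := by
  set α := alphaK n k γ with hαdef
  have hγ0 : 0 < γ := by linarith
  have hα0 : 0 < α := alpha_pos n k hn hk hγ
  set U : ℝ → ℝ := fun y => V y - y ^ α * M with hU
  by_contra hcon
  push_neg at hcon
  obtain ⟨r₀, hr₀mem, hr₀⟩ := hcon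
  have hU₀pos : 0 < U r₀ := by simp only [hU]; linarith
  have hr₀1 : r₀ < 1 := by
    rcases lt_or_eq_of_le hr₀mem.2 with h | h
    · exact h
    · exfalso; rw [h, Real.one_rpow, one_mul] at hr₀; linarith
  -- differentiability of V and φ
  have hdiffV : ∀ y ∈ Ioo (0:ℝ) 1, DifferentiableAt ℝ V y := fun y hy =>
    (hV2 y hy).differentiableAt two_ne_zero
  have hdiffφ : ∀ y : ℝ, 0 < y → DifferentiableAt ℝ (fun z : ℝ => z ^ α * M) y :=
    fun y hy => (phi_hasDeriv hy).differentiableAt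
  have hderivφ : ∀ y : ℝ, 0 < y → deriv (fun z : ℝ => z ^ α * M) y = α * y^(α-1) * M :=
    fun y hy => (phi_hasDeriv hy).deriv
  have hdiffU : ∀ y ∈ Ioo (0:ℝ) 1, DifferentiableAt ℝ U y := fun y hy =>
    (hdiffV y hy).sub (hdiffφ y hy.1)
  -- U continuous on Ioc 0 1
  have hφcont : ContinuousOn (fun z : ℝ => z ^ α * M) (Ioc (0:ℝ) 1) := fun y hy =>
    ((hdiffφ y hy.1).continuousAt).continuousWithinAt
  have hUcont : ContinuousOn U (Ioc (0:ℝ) 1) := hVc.sub hφcont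
  -- U tends to 0 at 0+
  have hrpow0 : Tendsto (fun r : ℝ => r ^ α * M) (nhdsWithin 0 (Ioi 0)) (nhds 0) := by
    have h1 : ContinuousAt (fun r : ℝ => r ^ α) 0 :=
      Real.continuousAt_rpow_const 0 α (Or.inr hα0.le)
    have h2 : Tendsto (fun r : ℝ => r ^ α) (nhds 0) (nhds 0) := by
      have := h1.tendsto
      rwa [Real.zero_rpow hα0.ne'] at this
    have h3 : Tendsto (fun r : ℝ => r ^ α) (nhdsWithin 0 (Ioi 0)) (nhds 0) :=
      h2.mono_left nhdsWithin_le_nhds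
    have := h3.mul_const M
    rwa [zero_mul] at this
  have hU0 : Tendsto U (nhdsWithin 0 (Ioi 0)) (nhds 0) := by
    have := hV0.sub hrpow0
    rwa [sub_zero] at this
  -- find δ
  have hevsm : ∀ᶠ y in nhdsWithin 0 (Ioi 0), U y < U r₀ :=
    hU0.eventually (eventually_lt_nhds hU₀pos)
  rw [Filter.eventually_iff, mem_nhdsGT_iff_exists_Ioc_subset] at hevsm
  obtain ⟨u, hu, husub⟩ := hevsm
  set δ := min u r₀ / 2 with hδ
  have hδpos : 0 < δ := by
    have : 0 < min u r₀ := lt_min hu hr₀mem.1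
    positivity
  have hδr₀ : δ < r₀ := by
    have h1 : min u r₀ ≤ r₀ := min_le_right _ _
    have := hr₀mem.1
    simp only [hδ]; linarith
  have hδu : δ ≤ u := by
    have h1 : min u r₀ ≤ u := min_le_left _ _
    have : 0 < min u r₀ := lt_min hu hr₀mem.1
    simp only [hδ]; linarith
  have hUδ : U δ < U r₀ := husub ⟨hδpos, hδu⟩
  -- compact max on [δ,1]
  have hsub1 : Icc δ 1 ⊆ Ioc (0:ℝ) 1 := fun y hy => ⟨lt_of_lt_of_le hδpos hy.1, hy.2⟩
  have hδ1 : δ ≤ 1 := by linarith [hr₀mem.2]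
  obtain ⟨x, hxmem, hxmax⟩ := isCompact_Icc.exists_isMaxOn (nonempty_Icc.2 hδ1)
    (hUcont.mono hsub1)
  have hxmax' : ∀ y ∈ Icc δ 1, U y ≤ U x := fun y hy => hxmax hy
  have hUr₀x : U r₀ ≤ U x := hxmax' r₀ ⟨hδr₀.le, hr₀mem.2⟩
  have hUxpos : 0 < U x := lt_of_lt_of_le hU₀pos hUr₀x
  have hx1 : x < 1 := by
    rcases lt_or_eq_of_le hxmem.2 with h | h
    · exact h
    · exfalso
      have : U 1 ≤ 0 := by simp only [hU, Real.one_rpow, one_mul]; linarith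
      rw [h] at hUxpos; linarith
  have hxδ : δ < x := by
    rcases lt_or_eq_of_le hxmem.1 with h | h
    · exact h
    · exfalso; rw [← h] at hUxpos hUr₀x; linarith
  have hx0 : 0 < x := lt_trans hδpos hxδ
  have hxIoo : x ∈ Ioo (0:ℝ) 1 := ⟨hx0, hx1⟩
  have hlocmax : IsLocalMax U x := hxmax.isLocalMax (Icc_mem_nhds hxδ hx1)
  -- deriv U on Ioo 0 1
  have hU'eq : ∀ y ∈ Ioo (0:ℝ) 1, deriv U y = deriv V y - α * y^(α-1) * M := by
    intro y hy
    rw [hU, deriv_fun_sub (hdiffV y hy) (hdiffφ y hy.1), hderivφ y hy.1]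
  -- deriv U x = 0
  have hU'x : deriv U x = 0 := hlocmax.deriv_eq_zero
  have hV'x : deriv V x = α * x^(α-1) * M := by
    have := hU'eq x hxIoo
    rw [hU'x] at this; linarith
  -- differentiability of deriv V at x
  have hVd' : DifferentiableAt ℝ (deriv V) x := by
    obtain ⟨s, hs, hVs⟩ := (hV2 x hxIoo).contDiffOn (le_refl 2) (by norm_num)
    obtain ⟨t, hts, htop, hxt⟩ := mem_nhds_iff.1 hs
    have hC : ContDiffOn ℝ 2 V t := hVs.mono hts
    have hd := hC.deriv_of_isOpen htop (m := 1) (by norm_num)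
    exact ((hd x hxt).differentiableWithinAt one_ne_zero).differentiableAt (htop.mem_nhds hxt)
  -- second derivative of U at x
  set D : ℝ := deriv (deriv V) x - α * (α-1) * x^(α-2) * M with hD
  have hg : HasDerivAt (fun y => deriv V y - α * y^(α-1) * M) D x :=
    (hVd'.hasDerivAt).sub (phi_hasDeriv2 hx0)
  have hev : deriv U =ᶠ[nhds x] fun y => deriv V y - α * y^(α-1) * M := by
    filter_upwards [Ioo_mem_nhds hxIoo.1 hxIoo.2] with y hy
    exact hU'eq y hy
  have hUd2 : HasDerivAt (deriv U) D x := hg.congr_of_eventuallyEq hev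
  have hDsign : D ≤ 0 := by
    apply secondDeriv_nonpos_of_isLocalMax hlocmax _ hUd2
    filter_upwards [Ioo_mem_nhds hxIoo.1 hxIoo.2] with y hy
    exact hdiffU y hy
  -- ODE at x
  have hODEx := hODE x hxIoo
  unfold Lk at hODEx
  set Ax : ℝ := ((n:ℝ) - 2)/x + 2*x/(ε + x^2) with hAx
  set cx : ℝ := (k:ℝ)*((k:ℝ) + (n:ℝ) - 3)/x^2 + 2/(γ*(ε + x^2)) with hcx
  -- barrier at x
  have hbar := barrier n k hn hk hγ hε hM hx0
  rw [← hαdef, ← hAx, ← hcx] at hbar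
  -- positivity of cx
  have hcxpos : 0 < cx := by
    have hn' : (2:ℝ) ≤ n := by exact_mod_cast hn
    have hk' : (1:ℝ) ≤ k := by exact_mod_cast hk
    have h1 : 0 ≤ (k:ℝ)*((k:ℝ) + (n:ℝ) - 3)/x^2 := by
      apply div_nonneg _ (sq_nonneg x); nlinarith
    have h2 : 0 < 2/(γ*(ε + x^2)) := by positivity
    rw [hcx]; linarith
  have hcU : 0 < cx * U x := mul_pos hcxpos hUxpos
  have hsplit : cx * U x = cx * V x - cx * (x ^ α * M) := by rw [hU]; ring
  -- contradiction
  rw [hV'x] at hODEx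
  have e1 : cx * V x = (deriv (deriv V) x) + Ax * (α * x^(α-1) * M) := by linarith
  have e2 : cx * (x ^ α * M) ≥ α * (α-1) * x^(α-2) * M + Ax * (α * x^(α-1) * M) := by
    linarith
  linarith [hcU, hsplit, e1, e2, hDsign]


/-- Decay estimate for spherical-harmonic modes, case `γ > 1`. -/
theorem mode_decay_large_gamma (n k : ℕ) (hn : 2 ≤ n) (hk : 1 ≤ k) (γ ε : ℝ)
    (hγ : 1 < γ) (hε : 0 < ε) (V : ℝ → ℝ)
    (hV2 : ∀ r ∈ Ioo (0:ℝ) 1, ContDiffAt ℝ 2 V r)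
    (hVc : ContinuousOn V (Ioc (0:ℝ) 1))
    (hODE : ∀ r ∈ Ioo (0:ℝ) 1, Lk n k γ ε V r = 0)
    (hV0 : Tendsto V (nhdsWithin 0 (Ioi 0)) (nhds 0)) :
    ∀ r ∈ Ioc (0:ℝ) 1, |V r| ≤ r ^ alphaK n k γ * |V 1| := by
  intro r hr
  have hM : 0 ≤ |V 1| := abs_nonneg _
  have h1 := one_side n k hn hk γ ε hγ hε V (|V 1|) hM (le_abs_self _) hV2 hVc hODE hV0 r hr
  have h2 := one_side n k hn hk γ ε hγ hε (fun y => -V y) (|V 1|) hM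
    (by simpa using neg_le_abs (V 1)) (fun y hy => (hV2 y hy).neg)
    (hVc.neg) (fun y hy => by rw [Lk_neg, hODE y hy, neg_zero]) (by simpa using hV0.neg) r hr
  rw [abs_le]
  refine ⟨?_, h1⟩
  have h2' : -(V r) ≤ r ^ alphaK n k γ * |V 1| := by simpa using h2
  linarith
end
end

section
/- Let n ≥ 2 be an integer, k ≥ 1 an integer, 0 < γ ≤ 1, and ε > 0. If V ∈ C²((0,1)) ∩ C((0,1]) satisfies L_k V = 0 on (0,1) and V(r) → 0 as r → 0+, then |V(r)| ≤ r |V(1)| for all r ∈ (0,1]. -/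
open Set Filter Topology

noncomputable section

/-- Second derivative test at a local minimum. -/
lemma second_deriv_nonneg_of_isLocalMin {f : ℝ → ℝ} {a : ℝ}
    (hf : ContDiffAt ℝ 2 f a) (hmin : IsLocalMin f a) :
    0 ≤ deriv (deriv f) a := by
  by_contra hneg
  push_neg at hneg
  obtain ⟨u, hu, hfu⟩ := hf.contDiffOn le_rfl (by simp)
  set s := interior u with hs_def
  have hs : IsOpen s := isOpen_interior
  have has : a ∈ s := mem_interior_iff_mem_nhds.mpr hu
  have hfs : ContDiffOn ℝ 2 f s := hfu.mono interior_subset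
  have hdiff : ∀ x ∈ s, DifferentiableAt ℝ f x := fun x hx =>
    (hfs.contDiffAt (hs.mem_nhds hx)).differentiableAt two_ne_zero
  have hf' : ContDiffOn ℝ 1 (deriv f) s := hfs.deriv_of_isOpen hs (by norm_num)
  have hderiv2 : DifferentiableAt ℝ (deriv f) a :=
    (hf'.contDiffAt (hs.mem_nhds has)).differentiableAt one_ne_zero
  have hD : HasDerivAt (deriv f) (deriv (deriv f) a) a := hderiv2.hasDerivAt
  have h0 : deriv f a = 0 := hmin.deriv_eq_zero
  have hslope : Tendsto (fun x => deriv f x / (x - a)) (𝓝[≠] a)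
      (𝓝 (deriv (deriv f) a)) := by
    have := hasDerivAt_iff_tendsto_slope.mp hD
    simpa [slope_fun_def_field, h0] using this
  have hev : ∀ᶠ x in 𝓝[≠] a, deriv f x / (x - a) < 0 :=
    hslope.eventually (Filter.Tendsto.eventually_lt_const hneg tendsto_id)
  have hev' : ∀ᶠ x in 𝓝 a, x ≠ a → deriv f x / (x - a) < 0 := by
    rw [eventually_nhdsWithin_iff] at hev
    filter_upwards [hev] with x hx hxa
    exact hx hxa
  have hmin' : ∀ᶠ x in 𝓝 a, f a ≤ f x := hmin
  have hsev : ∀ᶠ x in 𝓝 a, x ∈ s := hs.mem_nhds has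
  obtain ⟨δ, hδ, hball⟩ := Metric.eventually_nhds_iff.mp ((hev'.and hmin').and hsev)
  set b := a + δ/2 with hb
  have hab : a < b := by simp [hb]; linarith
  have hIcc : ∀ x ∈ Icc a b, dist x a < δ := by
    intro x hx
    rw [Real.dist_eq, abs_of_nonneg (by linarith [hx.1])]
    have := hx.2
    simp only [hb] at this
    linarith
  have hcont : ContinuousOn f (Icc a b) := fun x hx =>
    ((hdiff x (hball (hIcc x hx)).2).continuousAt).continuousWithinAt
  have hderneg : ∀ x ∈ interior (Icc a b), deriv f x < 0 := by
    intro x hx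
    rw [interior_Icc] at hx
    have hd := hball (hIcc x ⟨hx.1.le, hx.2.le⟩)
    have hq := hd.1.1 (ne_of_gt hx.1)
    have hxa : 0 < x - a := by linarith [hx.1]
    rcases div_neg_iff.mp hq with ⟨_, h2⟩ | ⟨h1, _⟩
    · linarith
    · exact h1
  have hanti : StrictAntiOn f (Icc a b) :=
    strictAntiOn_of_deriv_neg (convex_Icc a b) hcont hderneg
  have hfb : f b < f a := hanti ⟨le_refl a, hab.le⟩ ⟨hab.le, le_refl b⟩ hab
  have hfa : f a ≤ f b := (hball (hIcc b ⟨hab.le, le_refl b⟩)).1.2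
  linarith

set_option maxHeartbeats 1000000 in
/-- One-sided maximum principle estimate. -/
lemma one_sided (n k : ℕ) (hn : 2 ≤ n) (hk : 1 ≤ k) (γ ε : ℝ)
    (hγ0 : 0 < γ) (hγ1 : γ ≤ 1) (hε : 0 < ε) (V : ℝ → ℝ)
    (hV2 : ∀ r ∈ Ioo (0:ℝ) 1, ContDiffAt ℝ 2 V r)
    (hVc : ContinuousOn V (Ioc (0:ℝ) 1))
    (hODE : ∀ r ∈ Ioo (0:ℝ) 1, Lk n k γ ε V r = 0)
    (hV0 : Tendsto V (nhdsWithin 0 (Ioi 0)) (nhds 0)) :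
    ∀ r ∈ Ioc (0:ℝ) 1, V r ≤ r * |V 1| := by
  by_contra hcon
  push_neg at hcon
  obtain ⟨r₁, hr₁, hlt⟩ := hcon
  set C := |V 1| with hC
  set W : ℝ → ℝ := fun r => if 0 < r then C * r - V r else 0 with hW
  have hWpos : ∀ r : ℝ, 0 < r → W r = C * r - V r := by
    intro r hr; simp [hW, hr]
  have hW0 : W 0 = 0 := by simp [hW]
  -- continuity of W on [0,1]
  have hWc : ContinuousOn W (Icc 0 1) := by
    intro x hx
    rcases eq_or_lt_of_le hx.1 with h0 | h0
    · -- x = 0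
      have hsub : Icc (0:ℝ) 1 ⊆ insert 0 (Ioi 0) := by
        intro y hy
        rcases eq_or_lt_of_le hy.1 with h | h
        · exact Or.inl h.symm
        · exact Or.inr h
      have h1 : Tendsto W (𝓝[Ioi (0:ℝ)] 0) (𝓝 0) := by
        have hbase : Tendsto (fun r => C * r - V r) (𝓝[Ioi (0:ℝ)] 0) (𝓝 (C * 0 - 0)) := by
          exact Tendsto.sub (((continuous_const.mul continuous_id).tendsto 0).mono_left
            nhdsWithin_le_nhds) hV0
        have hbase' : Tendsto (fun r => C * r - V r) (𝓝[Ioi (0:ℝ)] 0) (𝓝 0) := by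
          simpa using hbase
        refine hbase'.congr' ?_
        filter_upwards [self_mem_nhdsWithin] with y hy
        exact (hWpos y hy).symm
      have h2 : Tendsto W (pure (0:ℝ)) (𝓝 0) := by
        have := tendsto_pure_nhds W 0
        rwa [hW0] at this
      rw [ContinuousWithinAt, ← h0, hW0]
      refine Tendsto.mono_left ?_ (nhdsWithin_mono 0 hsub)
      rw [nhdsWithin_insert]
      exact tendsto_sup.mpr ⟨h2, h1⟩
    · -- 0 < x
      have hx1 : x ∈ Ioc (0:ℝ) 1 := ⟨h0, hx.2⟩
      have hmem : Ioc (0:ℝ) 1 ∈ 𝓝[Icc (0:ℝ) 1] x := by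
        rw [mem_nhdsWithin]
        exact ⟨Ioi 0, isOpen_Ioi, h0, fun y hy => ⟨hy.1, hy.2.2⟩⟩
      have hV : ContinuousWithinAt V (Icc 0 1) x :=
        (hVc x hx1).mono_of_mem_nhdsWithin hmem
      have hφ : ContinuousWithinAt (fun r => C * r - V r) (Icc 0 1) x :=
        ((continuous_const.mul continuous_id).continuousWithinAt).sub hV
      refine hφ.congr_of_eventuallyEq ?_ (hWpos x h0)
      filter_upwards [mem_nhdsWithin_of_mem_nhds (Ioi_mem_nhds h0)] with y hy
      exact hWpos y hy
  obtain ⟨r₀, hr₀, hminOn⟩ := isCompact_Icc.exists_isMinOn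
    ⟨0, left_mem_Icc.mpr zero_le_one⟩ hWc
  have hWr₁ : W r₁ < 0 := by
    rw [hWpos r₁ hr₁.1, mul_comm]
    linarith
  have hneg : W r₀ < 0 :=
    lt_of_le_of_lt (hminOn ⟨hr₁.1.le, hr₁.2⟩) hWr₁
  have hr₀0 : r₀ ≠ 0 := by
    intro h; rw [h, hW0] at hneg; linarith
  have hC0 : 0 ≤ C := abs_nonneg _
  have hr₀1 : r₀ ≠ 1 := by
    intro h
    rw [h, hWpos 1 one_pos] at hneg
    have : V 1 ≤ C := le_abs_self _
    linarith
  have hr₀Ioo : r₀ ∈ Ioo (0:ℝ) 1 :=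
    ⟨lt_of_le_of_ne hr₀.1 (Ne.symm hr₀0), lt_of_le_of_ne hr₀.2 hr₀1⟩
  have hlocW : IsLocalMin W r₀ := hminOn.isLocalMin (Icc_mem_nhds hr₀Ioo.1 hr₀Ioo.2)
  have heq : W =ᶠ[𝓝 r₀] fun r => C * r - V r := by
    filter_upwards [Ioi_mem_nhds hr₀Ioo.1] with y hy
    exact hWpos y hy
  have hloc : IsLocalMin (fun r => C * r - V r) r₀ := hlocW.congr heq
  have hφ2 : ContDiffAt ℝ 2 (fun r => C * r - V r) r₀ :=
    ((contDiff_const.mul contDiff_id).contDiffAt).sub (hV2 r₀ hr₀Ioo)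
  have hpp0 : 0 ≤ deriv (deriv (fun r => C * r - V r)) r₀ :=
    second_deriv_nonneg_of_isLocalMin hφ2 hloc
  have hp0 : deriv (fun r => C * r - V r) r₀ = 0 := hloc.deriv_eq_zero
  have hder : ∀ᶠ r in 𝓝 r₀, deriv (fun r => C * r - V r) r = C - deriv V r := by
    filter_upwards [isOpen_Ioo.mem_nhds hr₀Ioo] with x hx
    have hVd : DifferentiableAt ℝ V x := (hV2 x hx).differentiableAt two_ne_zero
    have h1 : HasDerivAt (fun r => C * r - V r) (C * 1 - deriv V x) x :=
      ((hasDerivAt_id x).const_mul C).sub hVd.hasDerivAt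
    rw [h1.deriv]; ring
  have hVp : deriv V r₀ = C := by
    have := hder.self_of_nhds
    rw [hp0] at this
    linarith
  have hpp : deriv (deriv V) r₀ ≤ 0 := by
    have h2 : deriv (deriv (fun r => C * r - V r)) r₀
        = deriv (fun r => C - deriv V r) r₀ := Filter.EventuallyEq.deriv_eq hder
    rw [h2, deriv_const_sub] at hpp0
    linarith
  -- the ODE at r₀
  have hO := hODE r₀ hr₀Ioo
  unfold Lk at hO
  rw [hVp] at hO
  have ha : 0 < r₀ := hr₀Ioo.1
  have hE : 0 < ε + r₀^2 := by positivity
  have hγE : 0 < γ * (ε + r₀^2) := by positivity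
  have hk1 : (1:ℝ) ≤ (k:ℝ) := by exact_mod_cast hk
  have hn2 : (2:ℝ) ≤ (n:ℝ) := by exact_mod_cast hn
  have hVr₀ : C * r₀ < V r₀ := by
    rw [hWpos r₀ ha] at hneg
    linarith
  have hK : (0:ℝ) ≤ (k:ℝ) * ((k:ℝ) + (n:ℝ) - 3) := by nlinarith
  set A := ((n:ℝ) - 2)/r₀ + 2*r₀/(ε + r₀^2) with hAdef
  set B := (k:ℝ)*((k:ℝ) + (n:ℝ) - 3)/r₀^2 + 2/(γ*(ε + r₀^2)) with hBdef
  have hB : 0 < B := by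
    rw [hBdef]
    have h1 : (0:ℝ) ≤ (k:ℝ) * ((k:ℝ) + (n:ℝ) - 3)/r₀^2 := div_nonneg hK (sq_nonneg _)
    have h2 : (0:ℝ) < 2/(γ * (ε + r₀^2)) := by positivity
    linarith
  have hBA : A ≤ B * r₀ := by
    rw [hAdef, hBdef]
    have e1 : ((k:ℝ) * ((k:ℝ) + (n:ℝ) - 3)/r₀^2) * r₀
        = (k:ℝ) * ((k:ℝ) + (n:ℝ) - 3)/r₀ := by
      field_simp
    have e2 : (2/(γ * (ε + r₀^2))) * r₀ = 2*r₀/(γ * (ε + r₀^2)) := by ring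
    have h3 : ((n:ℝ) - 2)/r₀ ≤ (k:ℝ) * ((k:ℝ) + (n:ℝ) - 3)/r₀ := by
      gcongr
      nlinarith
    have h4 : 2*r₀/(ε + r₀^2) ≤ 2*r₀/(γ * (ε + r₀^2)) := by
      apply div_le_div_of_nonneg_left (by positivity) hγE
      nlinarith
    rw [add_mul, e1, e2]
    linarith
  -- final contradiction
  have t1 : 0 < B * (V r₀ - C * r₀) := mul_pos hB (by linarith)
  rw [mul_sub] at t1
  have t2 : 0 ≤ C * (B * r₀ - A) := mul_nonneg hC0 (by linarith)
  rw [mul_sub] at t2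
  have e3 : B * (C * r₀) = C * (B * r₀) := by ring
  have e4 : A * C = C * A := mul_comm _ _
  linarith [t1, t2, e3, e4, hO, hpp]

/-- Decay estimate for spherical-harmonic modes, case `0 < γ ≤ 1`. -/
theorem mode_decay_small_gamma (n k : ℕ) (hn : 2 ≤ n) (hk : 1 ≤ k) (γ ε : ℝ)
    (hγ0 : 0 < γ) (hγ1 : γ ≤ 1) (hε : 0 < ε) (V : ℝ → ℝ)
    (hV2 : ∀ r ∈ Ioo (0:ℝ) 1, ContDiffAt ℝ 2 V r)
    (hVc : ContinuousOn V (Ioc (0:ℝ) 1))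
    (hODE : ∀ r ∈ Ioo (0:ℝ) 1, Lk n k γ ε V r = 0)
    (hV0 : Tendsto V (nhdsWithin 0 (Ioi 0)) (nhds 0)) :
    ∀ r ∈ Ioc (0:ℝ) 1, |V r| ≤ r * |V 1| := by
  have hupper := one_sided n k hn hk γ ε hγ0 hγ1 hε V hV2 hVc hODE hV0
  -- apply to -V
  have hd1 : deriv (fun r => -V r) = fun r => -deriv V r := by
    funext x
    exact deriv.neg
  have hV2' : ∀ r ∈ Ioo (0:ℝ) 1, ContDiffAt ℝ 2 (fun r => -V r) r :=
    fun r hr => (hV2 r hr).neg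
  have hVc' : ContinuousOn (fun r => -V r) (Ioc (0:ℝ) 1) := hVc.neg
  have hODE' : ∀ r ∈ Ioo (0:ℝ) 1, Lk n k γ ε (fun r => -V r) r = 0 := by
    intro r hr
    have hO := hODE r hr
    unfold Lk at hO ⊢
    rw [hd1]
    rw [show deriv (fun r => -deriv V r) r = -deriv (deriv V) r from deriv.neg]
    simp only
    linarith [hO]
  have hV0' : Tendsto (fun r => -V r) (nhdsWithin 0 (Ioi 0)) (nhds 0) := by
    simpa using hV0.neg
  have hlower := one_sided n k hn hk γ ε hγ0 hγ1 hε (fun r => -V r) hV2' hVc' hODE' hV0'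
  intro r hr
  rw [abs_le]
  constructor
  · have := hlower r hr
    simp only [abs_neg] at this
    linarith
  · exact hupper r hr
end
end

section
/- Suppose u ∈ C(closure Ω̃) is harmonic in Ω̃, is C¹ on Ω̃ ∪ ∂D1 ∪ ∂D2, satisfies u + γ ∂_ν u = 0 on ∂D1 ∪ ∂D2, satisfies ∫_{∂D_j} ∂_ν u dH^{n−1} = 0 for j = 1, 2 (H^{n−1} the (n−1)-dimensional Hausdorff measure), satisfies u(x) = x_1 on ∂Ω, and is odd in x_1 (i.e. u changes sign when the sign of the first coordinate is flipped). Then u(x) ≥ x_1 for all x ∈ Ω̃ with x_1 ≥ 0, and u(x) ≤ x_1 for all x ∈ Ω̃ with x_1 ≤ 0. -/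
open MeasureTheory Metric Set
open scoped RealInnerProductSpace ENNReal

set_option maxHeartbeats 1000000

noncomputable section

abbrev E (k : ℕ) := EuclideanSpace ℝ (Fin k)

/-- Laplacian: sum of pure second directional derivatives. -/
def elap {k : ℕ} (u : E k → ℝ) (x : E k) : ℝ :=
  ∑ i : Fin k, iteratedFDeriv ℝ 2 u x ![EuclideanSpace.single i 1, EuclideanSpace.single i 1]

/-- Assemble the point `(p, t)`. -/
def eglue {m : ℕ} (p : E m) (t : ℝ) : E (m+1) :=
  (EuclideanSpace.equiv (Fin (m+1)) ℝ).symm fun i => Fin.lastCases t (fun j => p j) i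

/-- Flip the sign of the first coordinate. -/
def flipFirst {m : ℕ} (x : E (m+1)) : E (m+1) :=
  (EuclideanSpace.equiv (Fin (m+1)) ℝ).symm fun i => if i = 0 then -(x i) else x i

open Filter

section Aux

lemma eglue_zero_apply {m : ℕ} (t : ℝ) (i : Fin (m+1)) :
    eglue (0 : E m) t i = if i = Fin.last m then t else 0 := by
  have h : eglue (0 : E m) t i = Fin.lastCases t (fun j => (0 : E m) j) i := rfl
  rw [h]
  induction i using Fin.lastCases with
  | last => simp
  | cast j => simp [Fin.castSucc_lt_last j |>.ne]

lemma norm_eglue_zero {m : ℕ} (t : ℝ) : ‖eglue (0 : E m) t‖ = |t| := by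
  rw [EuclideanSpace.norm_eq]
  rw [Finset.sum_eq_single (Fin.last m)]
  · simp [eglue_zero_apply, Real.sqrt_sq_eq_abs]
  · intro b _ hb; simp [eglue_zero_apply, hb]
  · simp

lemma line_hasDerivAt {k : ℕ} (x e : E k) (t : ℝ) :
    HasDerivAt (fun t : ℝ => x + t • e) e t := by
  simpa using ((hasDerivAt_id t).smul_const e).const_add x

lemma comp_line_hasDerivAt {k : ℕ} {f : E k → ℝ} (x e : E k) {t : ℝ}
    (hf : DifferentiableAt ℝ f (x + t • e)) :
    HasDerivAt (fun s : ℝ => f (x + s • e)) (fderiv ℝ f (x + t • e) e) t :=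
  hf.hasFDerivAt.comp_hasDerivAt t (line_hasDerivAt x e t)

lemma line_mem_eventually {k : ℕ} {s : Set (E k)} (hs : IsOpen s) {x : E k} (e : E k)
    {t : ℝ} (hx : x + t • e ∈ s) : ∀ᶠ r in nhds t, x + r • e ∈ s := by
  have hc : Continuous (fun r : ℝ => x + r • e) := by continuity
  exact hc.continuousAt.eventually_mem (hs.mem_nhds hx)

lemma fderiv_line_hasDerivAt {k : ℕ} {f : E k → ℝ} {s : Set (E k)} (hs : IsOpen s) {x : E k}
    (hx : x ∈ s) (hf : ContDiffOn ℝ 2 f s) (e : E k) :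
    HasDerivAt (fun t : ℝ => fderiv ℝ f (x + t • e) e)
      (iteratedFDeriv ℝ 2 f x ![e, e]) 0 := by
  have h1 : ContDiffOn ℝ 1 (fderiv ℝ f) s := hf.fderiv_of_isOpen hs (le_refl 2)
  have hd2 : DifferentiableAt ℝ (fderiv ℝ f) x :=
    (h1.differentiableOn one_ne_zero).differentiableAt (hs.mem_nhds hx)
  have hh : HasFDerivAt (fun y => fderiv ℝ f y e)
      ((ContinuousLinearMap.apply ℝ ℝ e).comp (fderiv ℝ (fderiv ℝ f) x)) x :=
    (ContinuousLinearMap.apply ℝ ℝ e).hasFDerivAt.comp x hd2.hasFDerivAt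
  have hh0 : HasFDerivAt (fun y => fderiv ℝ f y e)
      ((ContinuousLinearMap.apply ℝ ℝ e).comp (fderiv ℝ (fderiv ℝ f) x))
      ((fun t : ℝ => x + t • e) 0) := by
    simpa using hh
  have := hh0.comp_hasDerivAt (0:ℝ) (line_hasDerivAt x e 0)
  rw [iteratedFDeriv_two_apply]
  simpa [Function.comp_def] using this

lemma lineDeriv2 {k : ℕ} {f : E k → ℝ} {s : Set (E k)} (hs : IsOpen s) {x : E k}
    (hx : x ∈ s) (hf : ContDiffOn ℝ 2 f s) (e : E k) :
    HasDerivAt (deriv fun t : ℝ => f (x + t • e))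
      (iteratedFDeriv ℝ 2 f x ![e, e]) 0 := by
  have hx0 : x + (0:ℝ) • e ∈ s := by simpa using hx
  have hdiff : ∀ᶠ r in nhds (0:ℝ), x + r • e ∈ s := line_mem_eventually hs e hx0
  have hfd : DifferentiableOn ℝ f s := hf.differentiableOn (by norm_num)
  have hev : (deriv fun t : ℝ => f (x + t • e)) =ᶠ[nhds (0:ℝ)]
      fun t => fderiv ℝ f (x + t • e) e := by
    filter_upwards [hdiff] with r hr
    exact (comp_line_hasDerivAt x e (hfd.differentiableAt (hs.mem_nhds hr))).deriv
  exact (fderiv_line_hasDerivAt hs hx hf e).congr_of_eventuallyEq hev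

lemma iter2_sub_linear {k : ℕ} {f : E k → ℝ} {s : Set (E k)} (hs : IsOpen s) {x : E k}
    (hx : x ∈ s) (hf : ContDiffOn ℝ 2 f s) (l : E k →L[ℝ] ℝ) (e : E k) :
    iteratedFDeriv ℝ 2 (fun y => f y - l y) x ![e, e]
      = iteratedFDeriv ℝ 2 f x ![e, e] := by
  have hg : ContDiffOn ℝ 2 (fun y => f y - l y) s :=
    hf.sub (l.contDiff.contDiffOn)
  have h1 := lineDeriv2 hs hx hg e
  have hx0 : x + (0:ℝ) • e ∈ s := by simpa using hx
  have hev : ∀ᶠ r in nhds (0:ℝ), x + r • e ∈ s := line_mem_eventually hs e hx0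
  have hfd : DifferentiableOn ℝ f s := hf.differentiableOn (by norm_num)
  have hgl : ∀ᶠ t in nhds (0:ℝ),
      HasDerivAt (fun r : ℝ => f (x + r • e) - l (x + r • e))
        (fderiv ℝ f (x + t • e) e - l e) t := by
    filter_upwards [hev] with t ht
    have hv : HasDerivAt (fun r : ℝ => f (x + r • e)) (fderiv ℝ f (x + t • e) e) t :=
      comp_line_hasDerivAt _ _ (hfd.differentiableAt (hs.mem_nhds ht))
    have hl : HasDerivAt (fun r : ℝ => l (x + r • e)) (l e) t :=
      l.hasFDerivAt.comp_hasDerivAt t (line_hasDerivAt x e t)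
    exact hv.sub hl
  have heq : (deriv fun t : ℝ => f (x + t • e) - l (x + t • e)) =ᶠ[nhds (0:ℝ)]
      fun t => fderiv ℝ f (x + t • e) e - l e := by
    filter_upwards [hgl] with t ht; exact ht.deriv
  have h2 : HasDerivAt (deriv fun t : ℝ => f (x + t • e) - l (x + t • e))
      (iteratedFDeriv ℝ 2 f x ![e, e]) 0 := by
    have := (fderiv_line_hasDerivAt hs hx hf e).sub_const (l e)
    exact this.congr_of_eventuallyEq heq
  exact h1.unique h2

lemma no_localMin_of_deriv2_neg {g : ℝ → ℝ} {c : ℝ}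
    (h1 : ∀ᶠ t in nhds (0:ℝ), DifferentiableAt ℝ g t)
    (h2 : HasDerivAt (deriv g) c 0) (hc : c < 0) : ¬ IsLocalMin g 0 := by
  intro hmin
  have hd0 : deriv g 0 = 0 := hmin.deriv_eq_zero
  have hslope : Tendsto (fun t => deriv g t / t) (nhdsWithin 0 (Ioi 0)) (nhds c) := by
    have := hasDerivAt_iff_tendsto_slope.1 h2
    have h' : Tendsto (slope (deriv g) 0) (nhdsWithin 0 (Ioi 0)) (nhds c) :=
      this.mono_left (nhdsWithin_mono 0 (fun t ht => ne_of_gt ht))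
    refine h'.congr (fun t => ?_)
    simp [slope_def_field, hd0]
  have hneg : ∀ᶠ t in nhdsWithin 0 (Ioi 0), deriv g t / t < 0 :=
    hslope.eventually_lt_const (by linarith : c < (0:ℝ))
  rw [eventually_nhdsWithin_iff] at hneg
  have hall : ∀ᶠ t in nhds (0:ℝ),
      DifferentiableAt ℝ g t ∧ (t ∈ Ioi (0:ℝ) → deriv g t / t < 0) ∧ g 0 ≤ g t :=
    h1.and (hneg.and hmin)
  rw [Metric.eventually_nhds_iff] at hall
  obtain ⟨δ, hδ, hball⟩ := hall
  have key : ∀ t : ℝ, |t| < δ →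
      DifferentiableAt ℝ g t ∧ (0 < t → deriv g t / t < 0) ∧ g 0 ≤ g t := by
    intro t ht
    simpa [Real.dist_eq] using hball (by simpa [Real.dist_eq] using ht)
  have hanti : StrictAntiOn g (Icc 0 (δ/2)) := by
    apply strictAntiOn_of_deriv_neg (convex_Icc 0 (δ/2))
    · intro t ht
      have habs : |t| < δ := by
        rcases ht with ⟨h1', h2'⟩
        rw [abs_lt]; constructor <;> linarith
      exact ((key t habs).1.continuousAt).continuousWithinAt
    · intro t ht
      rw [interior_Icc] at ht
      have habs : |t| < δ := by
        rcases ht with ⟨h1', h2'⟩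
        rw [abs_lt]; constructor <;> linarith
      obtain ⟨-, h2', -⟩ := key t habs
      have hq := h2' ht.1
      have ht0 : 0 < t := ht.1
      by_contra hcon
      push_neg at hcon
      have : 0 ≤ deriv g t / t := div_nonneg hcon (le_of_lt ht0)
      linarith
  have hlt : g (δ/2) < g 0 := by
    apply hanti
    · exact ⟨le_refl 0, by linarith⟩
    · exact ⟨by linarith, le_refl _⟩
    · linarith
  have hge : g 0 ≤ g (δ/2) := (key (δ/2) (by rw [abs_of_pos (by linarith)]; linarith)).2.2
  linarith

lemma hopf_dir {k : ℕ} {U : Set (E k)} {v : E k → ℝ} {z w : E k}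
    (hmin : ∀ x ∈ closure U, v z ≤ v x)
    (hdiff : DifferentiableAt ℝ v z)
    (hpath : ∀ᶠ t in nhdsWithin (0:ℝ) (Ioi 0), z + t • w ∈ U) :
    0 ≤ fderiv ℝ v z w := by
  have hz0 : DifferentiableAt ℝ v (z + (0:ℝ) • w) := by simpa using hdiff
  have hder : HasDerivAt (fun t : ℝ => v (z + t • w)) (fderiv ℝ v z w) 0 := by
    have := comp_line_hasDerivAt z w hz0
    simpa using this
  have hT : Tendsto (slope (fun t : ℝ => v (z + t • w)) 0)
      (nhdsWithin 0 (Ioi 0)) (nhds (fderiv ℝ v z w)) :=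
    (hasDerivAt_iff_tendsto_slope.1 hder).mono_left
      (nhdsWithin_mono 0 (fun t ht => ne_of_gt ht))
  refine ge_of_tendsto hT ?_
  filter_upwards [hpath, self_mem_nhdsWithin] with t ht ht0
  rw [slope_def_field]
  have h1 : v z ≤ v (z + t • w) := hmin _ (subset_closure ht)
  have h2 : v (z + (0:ℝ) • w) = v z := by simp
  rw [h2]
  apply div_nonneg (by linarith) (by simpa using le_of_lt ht0)

lemma minPrinciple {k : ℕ} (hk : 0 < k) {U : Set (E k)} (hU : IsOpen U)
    (hb : Bornology.IsBounded U) {v : E k → ℝ}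
    (hc : ContinuousOn v (closure U)) (hd : ContDiffOn ℝ 2 v U)
    (hl : ∀ x ∈ U, ∑ i : Fin k, iteratedFDeriv ℝ 2 v x
        ![EuclideanSpace.single i 1, EuclideanSpace.single i 1] = 0)
    (hne : U.Nonempty) :
    ∃ z ∈ frontier U, ∀ x ∈ closure U, v z ≤ v x := by
  obtain ⟨R₀, hR₀⟩ := hb.subset_closedBall 0
  set R : ℝ := max R₀ 1 with hRdef
  have hR1 : 1 ≤ R := le_max_right _ _
  have hRc : closure U ⊆ closedBall 0 R := by
    have : U ⊆ closedBall 0 R := hR₀.trans (closedBall_subset_closedBall (le_max_left _ _))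
    simpa using closure_mono this |>.trans (by simp [closure_closedBall])
  have hcomp : IsCompact (closure U) := hb.isCompact_closure
  -- frontier is nonempty
  have hfr_ne : (frontier U).Nonempty := by
    rw [nonempty_iff_ne_empty]
    intro h
    have hcl : IsClopen U := isClopen_iff_frontier_eq_empty.2 h
    rcases isClopen_iff.1 hcl with h' | h'
    · exact absurd h' (nonempty_iff_ne_empty.1 hne)
    · -- U = univ contradicts boundedness
      have hmem : EuclideanSpace.single (⟨0, hk⟩ : Fin k) (R+1) ∈ closedBall (0 : E k) R := by
        apply hRc; rw [h']; exact subset_closure (mem_univ _)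
      rw [mem_closedBall, dist_zero_right] at hmem
      rw [EuclideanSpace.norm_single, Real.norm_eq_abs, abs_of_pos (by linarith)] at hmem
      linarith
  have hfc : IsCompact (frontier U) :=
    hcomp.of_isClosed_subset isClosed_frontier (by rw [hU.frontier_eq]; exact diff_subset)
  obtain ⟨z, hz, hzmin⟩ := hfc.exists_isMinOn hfr_ne
    (hc.mono (by rw [hU.frontier_eq]; exact diff_subset))
  refine ⟨z, hz, ?_⟩
  by_contra hcon
  push_neg at hcon
  obtain ⟨x₀, hx₀, hx₀lt⟩ := hcon
  obtain ⟨y, hy, hymin⟩ := hcomp.exists_isMinOn ⟨x₀, hx₀⟩ hc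
  have hylt : v y < v z := lt_of_le_of_lt (hymin hx₀) hx₀lt
  set d : ℝ := v z - v y with hddef
  have hdpos : 0 < d := by simp [hddef]; linarith
  set σ : ℝ := d / (2 * (R^2 + 1)) with hσdef
  have hσpos : 0 < σ := div_pos hdpos (by nlinarith)
  have hσR : σ * R^2 < d := by
    rw [hσdef, div_mul_eq_mul_div, div_lt_iff₀ (by nlinarith)]
    nlinarith
  set w : E k → ℝ := fun p => v p - σ * ‖p‖^2 with hwdef
  have hwc : ContinuousOn w (closure U) :=
    hc.sub (((continuous_norm.pow 2).const_smul σ).continuousOn)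
  obtain ⟨y', hy', hwmin⟩ := hcomp.exists_isMinOn ⟨x₀, hx₀⟩ hwc
  -- y' is in U
  have hy'U : y' ∈ U := by
    by_contra hy'f
    have hy'fr : y' ∈ frontier U := by rw [hU.frontier_eq]; exact ⟨hy', hy'f⟩
    have h1 : v z ≤ v y' := hzmin hy'fr
    have h2 : ‖y'‖ ≤ R := by simpa [dist_zero_right] using hRc hy'
    have h3 : w y' ≤ w y := hwmin hy
    have h4 : w y ≤ v y := by
      simp only [hwdef]
      nlinarith [sq_nonneg ‖y‖, hσpos]
    have h5 : v z - σ * R^2 ≤ w y' := by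
      have hsq : ‖y'‖^2 ≤ R^2 := by nlinarith [norm_nonneg y']
      simp only [hwdef]
      nlinarith [hσpos]
    have : v y = v z - d := by rw [hddef]; ring
    linarith
  -- y' is an interior local minimum of w; derive a contradiction
  have hUnhds : closure U ∈ nhds y' := Filter.mem_of_superset (hU.mem_nhds hy'U) subset_closure
  have hloc : IsLocalMin w y' := hwmin.isLocalMin hUnhds
  have hsum := hl y' hy'U
  have hex : ∃ i : Fin k, iteratedFDeriv ℝ 2 v y'
      ![EuclideanSpace.single i 1, EuclideanSpace.single i 1] ≤ 0 := by
    by_contra hall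
    push_neg at hall
    have hpos : 0 < ∑ i : Fin k, iteratedFDeriv ℝ 2 v y'
        ![EuclideanSpace.single i 1, EuclideanSpace.single i 1] := by
      apply Finset.sum_pos (fun i _ => hall i)
      rw [Finset.univ_nonempty_iff]
      exact Fin.pos_iff_nonempty.1 hk
    rw [hsum] at hpos
    exact lt_irrefl 0 hpos
  obtain ⟨i, hi⟩ := hex
  set e : E k := EuclideanSpace.single i 1 with hedef
  have he : ‖e‖ = 1 := by simp [hedef, EuclideanSpace.norm_single]
  have h0U : y' + (0:ℝ) • e ∈ U := by simpa using hy'U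
  have hevU : ∀ᶠ t in nhds (0:ℝ), y' + t • e ∈ U := line_mem_eventually hU e h0U
  have hfd : DifferentiableOn ℝ v U := hd.differentiableOn (by norm_num)
  have hQ : ∀ t : ℝ, ‖y' + t • e‖^2 = ‖y'‖^2 + 2*⟪y',e⟫*t + t^2 := by
    intro t
    rw [norm_add_sq_real, real_inner_smul_right, norm_smul, he]
    rw [mul_pow]
    simp [Real.norm_eq_abs, sq_abs]
    ring
  have hgw : ∀ᶠ t in nhds (0:ℝ),
      HasDerivAt (fun s : ℝ => w (y' + s • e))
        (fderiv ℝ v (y' + t•e) e - σ*(2*⟪y',e⟫ + 2*t)) t := by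
    filter_upwards [hevU] with t ht
    have hv : HasDerivAt (fun s : ℝ => v (y' + s • e)) (fderiv ℝ v (y' + t•e) e) t :=
      comp_line_hasDerivAt _ _ (hfd.differentiableAt (hU.mem_nhds ht))
    have hqp : HasDerivAt (fun s : ℝ => ‖y'‖^2 + 2*⟪y',e⟫*s + s^2) (2*⟪y',e⟫ + 2*t) t := by
      have h2 : HasDerivAt (fun s : ℝ => s^2) (2*t) t := by simpa using hasDerivAt_pow 2 t
      simpa [Pi.add_def] using ((((hasDerivAt_id t).const_mul (2*⟪y',e⟫)).const_add (‖y'‖^2)).add h2)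
    have hq' : HasDerivAt (fun s : ℝ => ‖y' + s • e‖^2) (2*⟪y',e⟫ + 2*t) t := by
      have hfun : (fun s : ℝ => ‖y' + s • e‖^2) = fun s => ‖y'‖^2 + 2*⟪y',e⟫*s + s^2 :=
        funext hQ
      rw [hfun]; exact hqp
    simpa [hwdef, Pi.sub_def] using (hv.sub (hq'.const_mul σ))
  have hderiv_eq : (deriv fun s : ℝ => w (y' + s • e)) =ᶠ[nhds (0:ℝ)]
      fun t => fderiv ℝ v (y' + t•e) e - σ*(2*⟪y',e⟫ + 2*t) := by
    filter_upwards [hgw] with t ht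
    exact ht.deriv
  have hrhs : HasDerivAt (fun t => fderiv ℝ v (y' + t•e) e - σ*(2*⟪y',e⟫ + 2*t))
      (iteratedFDeriv ℝ 2 v y' ![e,e] - σ*2) 0 := by
    have h1 := fderiv_line_hasDerivAt hU hy'U hd e
    have h2 : HasDerivAt (fun t : ℝ => σ*(2*⟪y',e⟫ + 2*t)) (σ*2) 0 := by
      have := (((hasDerivAt_id (0:ℝ)).const_mul 2).const_add (2*⟪y',e⟫)).const_mul σ
      simpa using this
    exact h1.sub h2
  have h2nd : HasDerivAt (deriv fun s : ℝ => w (y' + s • e))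
      (iteratedFDeriv ℝ 2 v y' ![e,e] - σ*2) 0 :=
    hrhs.congr_of_eventuallyEq hderiv_eq
  have hmin0 : IsLocalMin (fun s : ℝ => w (y' + s • e)) 0 := by
    have hcont : ContinuousAt (fun t : ℝ => y' + t • e) 0 := by fun_prop
    have hy'0 : (fun t : ℝ => y' + t • e) 0 = y' := by simp
    have hloc' : ∀ᶠ p in nhds ((fun t : ℝ => y' + t • e) 0), w y' ≤ w p := by
      rw [hy'0]; exact hloc
    have hev : ∀ᶠ t in nhds (0:ℝ), w y' ≤ w (y' + t • e) := hcont.eventually hloc'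
    refine hev.mono (fun t ht => ?_)
    simpa using ht
  have hdiffev : ∀ᶠ t in nhds (0:ℝ), DifferentiableAt ℝ (fun s : ℝ => w (y' + s • e)) t := by
    filter_upwards [hgw] with t ht
    exact ht.differentiableAt
  exact no_localMin_of_deriv2_neg hdiffev h2nd (by linarith) hmin0

end Aux
/-- Step 3 of the proof of Theorem 1.7: comparison with the linear function `x₁`. -/
theorem comparison_with_linear (m : ℕ) (hm : 1 ≤ m) (γ ε : ℝ)
    (hγ : 1 < γ) (hε : ε ∈ Set.Ioo (0:ℝ) (1/4)) :
    ∀ u : E (m+1) → ℝ,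
    (fun c1 c2 Omt =>
      ContinuousOn u (closure Omt) ∧
      ContDiffOn ℝ 2 u Omt ∧
      (∀ x ∈ Omt, elap u x = 0) ∧
      (∀ x ∈ Omt ∪ sphere c1 1 ∪ sphere c2 1, DifferentiableAt ℝ u x) ∧
      ContinuousOn (fun x => gradient u x) (Omt ∪ sphere c1 1 ∪ sphere c2 1) ∧
      -- homogeneous Robin condition with inner normal `ν(x) = c_j - x`
      (∀ x ∈ sphere c1 1, u x + γ * ⟪c1 - x, gradient u x⟫ = 0) ∧
      (∀ x ∈ sphere c2 1, u x + γ * ⟪c2 - x, gradient u x⟫ = 0) ∧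
      -- zero flux
      (∫ x in sphere c1 1, ⟪c1 - x, gradient u x⟫ ∂(μH[(m:ℝ)]) = 0) ∧
      (∫ x in sphere c2 1, ⟪c2 - x, gradient u x⟫ ∂(μH[(m:ℝ)]) = 0) ∧
      -- boundary data `u(x) = x₁` on `∂Ω`
      (∀ x ∈ sphere (0 : E (m+1)) 5, u x = x 0) ∧
      -- `u` is odd in `x₁`
      (∀ x ∈ closure Omt, u (flipFirst x) = - u x))
      (eglue (0 : E m) (1 + ε/2))
      (eglue (0 : E m) (-1 - ε/2))
      (ball (0 : E (m+1)) 5 \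
        (closedBall (eglue (0 : E m) (1 + ε/2)) 1 ∪
         closedBall (eglue (0 : E m) (-1 - ε/2)) 1)) →
    ∀ x ∈ ball (0 : E (m+1)) 5 \
        (closedBall (eglue (0 : E m) (1 + ε/2)) 1 ∪
         closedBall (eglue (0 : E m) (-1 - ε/2)) 1),
      (0 ≤ x 0 → x 0 ≤ u x) ∧ (x 0 ≤ 0 → u x ≤ x 0) := by
  obtain ⟨hεp, hεlt⟩ := hε
  intro u hu
  obtain ⟨hc, hC2, helap, hdiffu, -, hrob1, hrob2, -, -, hbdry, hodd⟩ := hu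
  set c1 : E (m+1) := eglue (0 : E m) (1 + ε/2) with hc1def
  set c2 : E (m+1) := eglue (0 : E m) (-1 - ε/2) with hc2def
  set Omt : Set (E (m+1)) := ball (0 : E (m+1)) 5 \ (closedBall c1 1 ∪ closedBall c2 1)
    with hOmtdef
  -- basic coordinate facts
  have hlast_ne : (0 : Fin (m+1)) ≠ Fin.last m := by
    intro h
    have := congrArg Fin.val h
    simp [Fin.last] at this
    omega
  have hc1_0 : c1 0 = 0 := by rw [hc1def, eglue_zero_apply, if_neg hlast_ne]
  have hc2_0 : c2 0 = 0 := by rw [hc2def, eglue_zero_apply, if_neg hlast_ne]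
  have hnormc1 : ‖c1‖ = 1 + ε/2 := by
    rw [hc1def, norm_eglue_zero, abs_of_pos (by linarith)]
  have hnormc2 : ‖c2‖ = 1 + ε/2 := by
    rw [hc2def, norm_eglue_zero, abs_of_neg (by linarith)]
    ring
  have hsub12 : c1 - c2 = eglue (0 : E m) (2 + ε) := by
    ext i
    have h1 : (c1 - c2) i = c1 i - c2 i := rfl
    rw [h1, hc1def, hc2def, eglue_zero_apply, eglue_zero_apply, eglue_zero_apply]
    split_ifs <;> ring
  have hdist12 : dist c1 c2 = 2 + ε := by
    rw [dist_eq_norm, hsub12, norm_eglue_zero, abs_of_pos (by linarith)]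
  -- flip facts
  have hflip_apply : ∀ (x : E (m+1)) (i : Fin (m+1)),
      flipFirst x i = if i = 0 then -(x i) else x i := fun _ _ => rfl
  have hflip0 : ∀ x : E (m+1), flipFirst x 0 = -(x 0) := by
    intro x; rw [hflip_apply]; simp
  have hflip_fix : ∀ x : E (m+1), x 0 = 0 → flipFirst x = x := by
    intro x hx0
    ext i
    rw [hflip_apply]
    split_ifs with h
    · rw [h, hx0]; ring
    · rfl
  have hflip_norm : ∀ x : E (m+1), ‖flipFirst x‖ = ‖x‖ := by
    intro x
    rw [EuclideanSpace.norm_eq, EuclideanSpace.norm_eq]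
    congr 1
    apply Finset.sum_congr rfl
    intro i _
    rw [hflip_apply]
    split_ifs <;> simp
  have hflip_sub : ∀ x y : E (m+1), flipFirst x - flipFirst y = flipFirst (x - y) := by
    intro x y
    ext i
    have h1 : (flipFirst x - flipFirst y) i = flipFirst x i - flipFirst y i := rfl
    have h2 : (x - y) i = x i - y i := rfl
    rw [h1, hflip_apply, hflip_apply, hflip_apply, h2]
    split_ifs <;> ring
  have hflip_mem : ∀ x ∈ Omt, flipFirst x ∈ Omt := by
    intro x hx
    obtain ⟨hxb, hxc⟩ := hx
    have hd0 : dist (flipFirst x) 0 = dist x 0 := by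
      rw [dist_zero_right, dist_zero_right, hflip_norm]
    have hd1 : dist (flipFirst x) c1 = dist x c1 := by
      rw [dist_eq_norm, dist_eq_norm]
      nth_rewrite 1 [← hflip_fix c1 hc1_0]
      rw [hflip_sub, hflip_norm]
    have hd2 : dist (flipFirst x) c2 = dist x c2 := by
      rw [dist_eq_norm, dist_eq_norm]
      nth_rewrite 1 [← hflip_fix c2 hc2_0]
      rw [hflip_sub, hflip_norm]
    constructor
    · rw [mem_ball, hd0]; exact mem_ball.1 hxb
    · intro hmem
      apply hxc
      rcases hmem with h | h
      · exact Or.inl (by rw [mem_closedBall, ← hd1]; exact mem_closedBall.1 h)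
      · exact Or.inr (by rw [mem_closedBall, ← hd2]; exact mem_closedBall.1 h)
  -- u vanishes where the first coordinate vanishes
  have hzero : ∀ p ∈ closure Omt, p 0 = 0 → u p = 0 := by
    intro p hp hp0
    have h := hodd p hp
    rw [hflip_fix p hp0] at h
    linarith
  -- the main positivity claim
  have hOmtOpen : IsOpen Omt :=
    isOpen_ball.sdiff ((Metric.isClosed_closedBall).union Metric.isClosed_closedBall)
  have hpos : ∀ p ∈ Omt, 0 < p 0 → p 0 ≤ u p := by
    set l : E (m+1) →L[ℝ] ℝ := EuclideanSpace.proj (0 : Fin (m+1)) with hldef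
    set v : E (m+1) → ℝ := fun y => u y - l y with hvdef
    set U : Set (E (m+1)) := Omt ∩ {y : E (m+1) | 0 < y 0} with hUdef
    have hUOpen : IsOpen U := hOmtOpen.inter (isOpen_lt continuous_const l.continuous)
    have hUsub : U ⊆ Omt := inter_subset_left
    have hUb : Bornology.IsBounded U := (isBounded_ball).subset (fun y hy => hy.1.1)
    have hclU_Omt : closure U ⊆ closure Omt := closure_mono hUsub
    have hclU_pos : ∀ y ∈ closure U, 0 ≤ y 0 := by
      intro y hy
      have h1 : closure U ⊆ {y : E (m+1) | 0 ≤ y 0} :=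
        closure_minimal (fun q hq => (le_of_lt hq.2 : (0:ℝ) ≤ q 0))
          (isClosed_le continuous_const l.continuous)
      exact h1 hy
    have hcv : ContinuousOn v (closure U) :=
      (hc.mono hclU_Omt).sub (l.continuous.continuousOn)
    have hdv : ContDiffOn ℝ 2 v U := (hC2.mono hUsub).sub (l.contDiff.contDiffOn)
    have hlv : ∀ q ∈ U, ∑ i : Fin (m+1), iteratedFDeriv ℝ 2 v q
        ![EuclideanSpace.single i 1, EuclideanSpace.single i 1] = 0 := by
      intro q hq
      have hsum : ∀ i : Fin (m+1), iteratedFDeriv ℝ 2 v q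
          ![EuclideanSpace.single i 1, EuclideanSpace.single i 1]
          = iteratedFDeriv ℝ 2 u q
            ![EuclideanSpace.single i 1, EuclideanSpace.single i 1] := fun i =>
        iter2_sub_linear hOmtOpen hq.1 hC2 l _
      rw [Finset.sum_congr rfl (fun i _ => hsum i)]
      exact helap q hq.1
    intro p hp hp0
    obtain ⟨z, hzfr, hzmin⟩ :=
      minPrinciple (Nat.succ_pos m) hUOpen hUb hcv hdv hlv ⟨p, hp, hp0⟩
    have hzcl : z ∈ closure U := frontier_subset_closure hzfr
    have hz0 : 0 ≤ z 0 := hclU_pos z hzcl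
    have hzOmtcl : z ∈ closure Omt := hclU_Omt hzcl
    have hvz : 0 ≤ v z := by
      rcases eq_or_lt_of_le hz0 with h0 | h0
      · have hz' := hzero z hzOmtcl h0.symm
        have : v z = u z - z 0 := rfl
        rw [this, hz', ← h0]; norm_num
      · have hznotU : z ∉ U := (hUOpen.frontier_eq ▸ hzfr).2
        have hznotOmt : z ∉ Omt := fun hzo => hznotU ⟨hzo, h0⟩
        by_cases hzball : z ∈ ball (0 : E (m+1)) 5
        · -- z is on one of the interior spheres: use the Robin condition
          have hzcb : z ∈ closedBall c1 1 ∪ closedBall c2 1 := by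
            by_contra hcb
            exact hznotOmt ⟨hzball, hcb⟩
          have hlow : ∀ c : E (m+1), closedBall c 1 ⊆ closedBall c1 1 ∪ closedBall c2 1 →
              1 ≤ dist z c := by
            intro c hcsub
            have h1 : Omt ⊆ (ball c 1)ᶜ := by
              intro y hy hyb
              exact hy.2 (hcsub (ball_subset_closedBall hyb))
            have h2 : closure Omt ⊆ (ball c 1)ᶜ :=
              closure_minimal h1 (isOpen_ball.isClosed_compl)
            have h3 := h2 hzOmtcl
            simp only [mem_compl_iff, mem_ball, not_lt] at h3
            exact h3
          have hmain : ∀ c cother : E (m+1), c 0 = 0 →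
              dist z c = 1 → 1 + ε ≤ dist z cother →
              closedBall c1 1 ∪ closedBall c2 1 = closedBall c 1 ∪ closedBall cother 1 →
              (u z + γ * ⟪c - z, gradient u z⟫ = 0) →
              DifferentiableAt ℝ u z →
              0 ≤ v z := by
            intro c cother hc0 hzc hzother hun hrob hdiffz
            have hw : ‖z - c‖ = 1 := by rw [← dist_eq_norm]; exact hzc
            have hpath : ∀ᶠ t in nhdsWithin (0:ℝ) (Ioi 0), z + t • (z - c) ∈ U := by
              have hz5 : dist z 0 < 5 := mem_ball.1 hzball
              have hmempos : (0:ℝ) < min ε (5 - dist z 0) := by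
                apply lt_min hεp
                linarith
              have hmem : Ioo (0:ℝ) (min ε (5 - dist z 0)) ∈ nhdsWithin (0:ℝ) (Ioi 0) :=
                Ioo_mem_nhdsGT_of_mem ⟨le_refl 0, hmempos⟩
              filter_upwards [hmem] with t ht
              obtain ⟨ht0, htlt⟩ := ht
              have htε : t < ε := lt_of_lt_of_le htlt (min_le_left _ _)
              have ht5 : t < 5 - dist z 0 := lt_of_lt_of_le htlt (min_le_right _ _)
              have hzz : dist (z + t • (z - c)) z = t := by
                rw [dist_eq_norm, add_sub_cancel_left, norm_smul, hw,
                  Real.norm_eq_abs, abs_of_pos ht0]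
                ring
              refine ⟨⟨?_, ?_⟩, ?_⟩
              · rw [mem_ball]
                calc dist (z + t • (z - c)) 0 ≤ dist (z + t • (z - c)) z + dist z 0 :=
                      dist_triangle _ _ _
                  _ = t + dist z 0 := by rw [hzz]
                  _ < 5 := by linarith
              · rw [hun]
                intro hmem'
                rcases hmem' with hmem' | hmem'
                · have heq : z + t • (z - c) - c = (1+t) • (z - c) := by
                    rw [add_smul, one_smul]
                    abel
                  have hdc : dist (z + t • (z - c)) c = 1 + t := by
                    rw [dist_eq_norm, heq, norm_smul, hw, Real.norm_eq_abs,
                      abs_of_pos (by linarith : (0:ℝ) < 1 + t)]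
                    ring
                  rw [mem_closedBall, hdc] at hmem'
                  linarith
                · rw [mem_closedBall] at hmem'
                  have htri := dist_triangle z (z + t • (z - c)) cother
                  rw [dist_comm z (z + t • (z - c))] at htri
                  linarith
              · show 0 < (z + t • (z - c)) 0
                have heq0 : (z + t • (z - c)) 0 = z 0 + t * (z 0 - c 0) := rfl
                rw [heq0, hc0]
                nlinarith
            have hdiffv : DifferentiableAt ℝ v z := hdiffz.sub l.differentiableAt
            have hA := hopf_dir hzmin hdiffv hpath
            have hfd : fderiv ℝ v z (z - c) = fderiv ℝ u z (z - c) - (z 0 - c 0) := by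
              have h1 : fderiv ℝ v z = fderiv ℝ u z - l := by
                rw [hvdef]
                rw [fderiv_fun_sub hdiffz l.differentiableAt]
                simp [ContinuousLinearMap.fderiv]
              rw [h1]
              rfl
            set A := fderiv ℝ u z (z - c) with hAdef
            have hinner : ⟪c - z, gradient u z⟫ = -A := by
              rw [real_inner_comm]
              have hgrad : ⟪gradient u z, c - z⟫ = fderiv ℝ u z (c - z) := by
                rw [gradient]
                exact InnerProductSpace.toDual_symm_apply
              rw [hgrad, show c - z = -(z - c) by abel, map_neg, hAdef]
            have hrobA : u z = γ * A := by
              rw [hinner] at hrob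
              linarith
            have hAz : z 0 ≤ A := by
              rw [hfd, hc0] at hA
              linarith
            have hvzeq : v z = γ * A - z 0 := by
              have h2 : v z = u z - z 0 := rfl
              rw [h2, hrobA]
            rw [hvzeq]
            nlinarith
          rcases hzcb with hzc | hzc
          · have h1 : dist z c1 = 1 :=
              le_antisymm (mem_closedBall.1 hzc) (hlow c1 subset_union_left)
            have h2 : 1 + ε ≤ dist z c2 := by
              have htri := dist_triangle c1 z c2
              rw [dist_comm c1 z, hdist12] at htri
              linarith
            exact hmain c1 c2 hc1_0 h1 h2 rfl (hrob1 z h1)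
              (hdiffu z (Or.inl (Or.inr h1)))
          · have h1 : dist z c2 = 1 :=
              le_antisymm (mem_closedBall.1 hzc) (hlow c2 subset_union_right)
            have h2 : 1 + ε ≤ dist z c1 := by
              have htri := dist_triangle c2 z c1
              rw [dist_comm c2 z, dist_comm c2 c1, hdist12] at htri
              linarith
            exact hmain c2 c1 hc2_0 h1 h2 (union_comm _ _) (hrob2 z h1)
              (hdiffu z (Or.inr h1))
        · -- z is on the outer sphere
          have h5le : dist z 0 ≤ 5 := by
            have hcl5 : closure Omt ⊆ closedBall 0 5 := by
              have h1 : Omt ⊆ ball (0 : E (m+1)) 5 := fun y hy => hy.1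
              have := closure_mono h1
              rwa [closure_ball (0 : E (m+1)) (by norm_num : (5:ℝ) ≠ 0)] at this
            exact mem_closedBall.1 (hcl5 hzOmtcl)
          have h5ge : 5 ≤ dist z 0 := by
            rw [mem_ball] at hzball
            exact not_lt.1 hzball
          have h5 : dist z 0 = 5 := le_antisymm h5le h5ge
          have hbz := hbdry z h5
          have : v z = u z - z 0 := rfl
          rw [this, hbz]
          norm_num
    have hle := hzmin p (subset_closure ⟨hp, hp0⟩)
    have hvp : v p = u p - p 0 := rfl
    linarith [hvz, hle]
  -- conclusion
  intro x hx
  constructor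
  · intro hx0
    rcases eq_or_lt_of_le hx0 with h | h
    · have := hzero x (subset_closure hx) h.symm
      rw [this, ← h]
    · exact hpos x hx h
  · intro hx0
    rcases eq_or_lt_of_le hx0 with h | h
    · have := hzero x (subset_closure hx) h
      rw [this, h]
    · have hfx : flipFirst x ∈ Omt := hflip_mem x hx
      have hfx0 : 0 < (flipFirst x) 0 := by rw [hflip0]; linarith
      have h1 : (flipFirst x) 0 ≤ u (flipFirst x) := hpos _ hfx hfx0
      have h2 : u (flipFirst x) = - u x := hodd x (subset_closure hx)
      rw [hflip0, h2] at h1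
      linarith
end
end
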